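/- Let (Ω, Σ, μ) be a finite measure space, let L⁰(μ) be the algebra of equivalence classes of measurable functions Ω → ℂ modulo μ-a.e. equality, let n ≥ 1, and let D be a ℂ-linear map on the n×n matrix algebra Mₙ(L⁰(μ)) satisfying D(xy) = D(x)y + xD(y) for all x, y. Then D can be represented as a sum D = D_a + D_δ, where D_a(x) = ax − xa for some fixed a ∈ Mₙ(L⁰(μ)), and D_δ is the entrywise application of some ℂ-linear map δ : L⁰(μ) → L⁰(μ) satisfying δ(fg) = δ(f)g + fδ(g). Moreover this representation is unique: if D = D_{a₁} + D_{δ₁} = D_{a₂} + D_{δ₂} are two such representations, then δ₁ = δ₂ and a₁x − xa₁ = a₂x − xa₂ for all x ∈ Mₙ(L⁰(μ)). -/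

import Mathlib

open MeasureTheory

namespace MeasureTheory.AEEqFun
variable {α : Type*} [MeasurableSpace α] {μ : Measure α}

noncomputable instance : CommRing (α →ₘ[μ] ℂ) where
  __ := (inferInstance : AddCommGroup (α →ₘ[μ] ℂ))
  __ := (inferInstance : CommMonoid (α →ₘ[μ] ℂ))
  left_distrib f g h := toGerm_injective <| by
    simp [mul_toGerm, add_toGerm, mul_add]
  right_distrib f g h := toGerm_injective <| by
    simp [mul_toGerm, add_toGerm, add_mul]
  zero_mul f := toGerm_injective <| by simp [mul_toGerm, zero_toGerm]
  mul_zero f := toGerm_injective <| by simp [mul_toGerm, zero_toGerm]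

instance : SMulCommClass ℂ (α →ₘ[μ] ℂ) (α →ₘ[μ] ℂ) :=
  ⟨fun c f g => induction_on₂ f g fun f hf g hg => by
    simp only [smul_eq_mul, mk_mul_mk, smul_mk, mul_smul_comm]⟩

instance : IsScalarTower ℂ (α →ₘ[μ] ℂ) (α →ₘ[μ] ℂ) :=
  ⟨fun c f g => induction_on₂ f g fun f hf g hg => by
    simp only [smul_eq_mul, mk_mul_mk, smul_mk, smul_mul_assoc]⟩

noncomputable instance : Algebra ℂ (α →ₘ[μ] ℂ) := Algebra.ofModule
  (fun c f g => smul_mul_assoc c f g) (fun c f g => mul_smul_comm c f g)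

end MeasureTheory.AEEqFun

set_option linter.unusedSectionVars false

section Generic

variable {R : Type*} [CommRing R] [Algebra ℂ R]

/-- The matrix unit `e i j`. -/
private def E {R : Type*} [CommRing R] {n : ℕ} (i j : Fin n) :
    Matrix (Fin n) (Fin n) R := Matrix.single i j 1

private lemma E_mul {n : ℕ} (i j k l : Fin n) :
    (E i j : Matrix (Fin n) (Fin n) R) * E k l = if j = k then E i l else 0 := by
  by_cases h : j = k
  · subst h
    rw [if_pos rfl, E, E, E, Matrix.single_mul_single_same, one_mul]
  · rw [if_neg h, E, E]
    exact Matrix.single_mul_single_of_ne _ _ _ _ h _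

private lemma E_sum {n : ℕ} : (∑ i, (E i i : Matrix (Fin n) (Fin n) R)) = 1 := by
  ext i j
  rw [Matrix.sum_apply, Matrix.one_apply]
  simp only [E]
  by_cases h : i = j
  · subst h
    rw [Finset.sum_eq_single i
      (fun b _ hb => Matrix.single_apply_of_ne _ _ _ _ _ (fun hc => hb hc.1))
      (fun hi => absurd (Finset.mem_univ i) hi)]
    rw [if_pos rfl, Matrix.single_apply_same]
  · rw [if_neg h]
    exact Finset.sum_eq_zero fun k _ =>
      Matrix.single_apply_of_ne _ _ _ _ _ (by rintro ⟨rfl, rfl⟩; exact h rfl)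

private lemma aux_hfac (n : ℕ) (r : R) (i j : Fin n) :
    Matrix.scalar (Fin n) r * E i j = Matrix.single i j r := by
  ext i' j'
  rw [Matrix.scalar_apply, Matrix.diagonal_mul, E]
  by_cases h : i = i' ∧ j = j'
  · obtain ⟨rfl, rfl⟩ := h
    rw [Matrix.single_apply_same, Matrix.single_apply_same, mul_one]
  · rw [Matrix.single_apply_of_ne _ _ _ _ _ h,
      Matrix.single_apply_of_ne _ _ _ _ _ h, mul_zero]

private lemma aux_scalar_comm (n : ℕ) (r : R) (x : Matrix (Fin n) (Fin n) R) :
    Matrix.scalar (Fin n) r * x = x * Matrix.scalar (Fin n) r :=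
  Matrix.scalar_commute r (fun r' => mul_comm r r') x

private lemma aux_scalar_entry (n : ℕ) (hn : 1 ≤ n) (r : R) :
    Matrix.scalar (Fin n) r ⟨0, hn⟩ ⟨0, hn⟩ = r := by
  rw [Matrix.scalar_apply, Matrix.diagonal_apply_eq]

/-- Existence part, over a general commutative `ℂ`-algebra. -/
private lemma aux_exists (n : ℕ) (hn : 1 ≤ n)
    (D : Matrix (Fin n) (Fin n) R →ₗ[ℂ] Matrix (Fin n) (Fin n) R)
    (hD : ∀ x y, D (x * y) = D x * y + x * D y) :
    ∃ (a : Matrix (Fin n) (Fin n) R) (δ : R →ₗ[ℂ] R),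
      (∀ f g : R, δ (f * g) = δ f * g + f * δ g) ∧
      ∀ x, D x = (a * x - x * a) + x.map δ := by
  classical
  set z : Fin n := ⟨0, hn⟩ with hz
  set a : Matrix (Fin n) (Fin n) R := ∑ i, D (E i z) * E z i with ha
  have key : ∀ k l, a * E k l - E k l * a = D (E k l) := by
    intro k l
    have h1 : a * E k l = D (E k z) * E z l := by
      rw [ha, Finset.sum_mul]
      rw [Finset.sum_congr rfl (fun i _ => show D (E i z) * E z i * E k l
            = if i = k then D (E k z) * E z l else 0 by
          rw [mul_assoc, E_mul]
          by_cases h : i = k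
          · subst h; rw [if_pos rfl, if_pos rfl]
          · rw [if_neg h, if_neg h, mul_zero])]
      rw [Finset.sum_ite_eq' Finset.univ k, if_pos (Finset.mem_univ k)]
    have h2 : ∀ i, E k l * D (E i z)
        = (if l = i then D (E k z) else 0) - D (E k l) * E i z := by
      intro i
      have h3 := hD (E k l) (E i z)
      rw [E_mul] at h3
      by_cases h : l = i
      · rw [if_pos h] at h3 ⊢
        rw [eq_sub_iff_add_eq, add_comm]
        exact h3.symm
      · rw [if_neg h] at h3 ⊢
        rw [map_zero] at h3
        rw [zero_sub, eq_neg_iff_add_eq_zero, add_comm]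
        exact h3.symm
    have h4 : E k l * a = D (E k z) * E z l - D (E k l) := by
      rw [ha, Finset.mul_sum]
      rw [Finset.sum_congr rfl (fun i _ => show E k l * (D (E i z) * E z i)
            = (if l = i then D (E k z) * E z i else 0) - D (E k l) * (E i z * E z i) by
          rw [← mul_assoc, h2 i, sub_mul, mul_assoc]
          congr 1
          by_cases h : l = i
          · rw [if_pos h, if_pos h]
          · rw [if_neg h, if_neg h, zero_mul])]
      rw [Finset.sum_sub_distrib]
      rw [Finset.sum_ite_eq Finset.univ l, if_pos (Finset.mem_univ l)]
      rw [← Finset.mul_sum]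
      rw [Finset.sum_congr rfl (fun i _ => show (E i z : Matrix (Fin n) (Fin n) R) * E z i
            = E i i by rw [E_mul, if_pos rfl])]
      rw [E_sum, mul_one]
    rw [h1, h4, sub_sub_cancel]
  set D' : Matrix (Fin n) (Fin n) R →ₗ[ℂ] Matrix (Fin n) (Fin n) R :=
    D - (LinearMap.mulLeft ℂ a - LinearMap.mulRight ℂ a) with hD'def
  have hD'x : ∀ x, D' x = D x - (a * x - x * a) := by
    intro x
    simp only [hD'def, LinearMap.sub_apply, LinearMap.mulLeft_apply, LinearMap.mulRight_apply]
  have hD'leib : ∀ x y, D' (x * y) = D' x * y + x * D' y := by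
    intro x y
    rw [hD'x, hD'x, hD'x, hD x y]
    noncomm_ring
  have hD'e : ∀ k l, D' (E k l : Matrix (Fin n) (Fin n) R) = 0 := by
    intro k l
    rw [hD'x, key, sub_self]
  have hD'S_comm : ∀ (f : R) x,
      D' (Matrix.scalar (Fin n) f) * x = x * D' (Matrix.scalar (Fin n) f) := by
    intro f x
    have h1 := hD'leib (Matrix.scalar (Fin n) f) x
    have h2 := hD'leib x (Matrix.scalar (Fin n) f)
    rw [aux_scalar_comm n f x] at h1
    have h5 : D' (Matrix.scalar (Fin n) f) * x + Matrix.scalar (Fin n) f * D' x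
        = D' x * Matrix.scalar (Fin n) f + x * D' (Matrix.scalar (Fin n) f) :=
      h1.symm.trans h2
    rw [aux_scalar_comm n f (D' x)] at h5
    rw [add_comm (D' x * Matrix.scalar (Fin n) f)] at h5
    exact add_right_cancel h5
  have hDS : ∀ f : R, D' (Matrix.scalar (Fin n) f)
      = Matrix.scalar (Fin n) ((D' (Matrix.scalar (Fin n) f)) z z) := by
    intro f
    obtain ⟨r, hr⟩ := Matrix.mem_range_scalar_of_commute_single
      (M := D' (Matrix.scalar (Fin n) f)) (fun i j _ => (hD'S_comm f _).symm)
    rw [← hr, aux_scalar_entry n hn r]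
  have hSsmul : ∀ (c : ℂ) (f : R), Matrix.scalar (Fin n) (c • f)
      = c • Matrix.scalar (Fin n) f := by
    intro c f
    ext i j
    by_cases h : i = j
    · subst h
      rw [Matrix.smul_apply, Matrix.scalar_apply, Matrix.scalar_apply,
        Matrix.diagonal_apply_eq, Matrix.diagonal_apply_eq]
    · rw [Matrix.smul_apply, Matrix.scalar_apply, Matrix.scalar_apply,
        Matrix.diagonal_apply_ne _ h, Matrix.diagonal_apply_ne _ h, smul_zero]
  set δ : R →ₗ[ℂ] R :=
    { toFun := fun f => (D' (Matrix.scalar (Fin n) f)) z z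
      map_add' := fun f g => by
        simp only [map_add, Matrix.add_apply]
      map_smul' := fun c f => by
        simp only [hSsmul, _root_.map_smul, Matrix.smul_apply, RingHom.id_apply] } with hδdef
  have hδ_apply : ∀ f, δ f = (D' (Matrix.scalar (Fin n) f)) z z := fun f => rfl
  have hDSδ : ∀ f : R, D' (Matrix.scalar (Fin n) f) = Matrix.scalar (Fin n) (δ f) := by
    intro f; rw [hδ_apply]; exact hDS f
  have hδleib : ∀ f g : R, δ (f * g) = δ f * g + f * δ g := by
    intro f g
    have h2 := hD'leib (Matrix.scalar (Fin n) f) (Matrix.scalar (Fin n) g)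
    rw [← map_mul, hDSδ, hDSδ, hDSδ, ← map_mul, ← map_mul, ← map_add] at h2
    have h3 := congrFun (congrFun
      (congrArg (fun m : Matrix (Fin n) (Fin n) R => (m : Fin n → Fin n → R)) h2) z) z
    simpa only [aux_scalar_entry n hn, Matrix.scalar_apply, Matrix.diagonal_apply_eq] using h3
  have hmap : ∀ x : Matrix (Fin n) (Fin n) R, D' x = x.map δ := by
    intro x
    conv_lhs => rw [Matrix.matrix_eq_sum_single x]
    rw [map_sum]
    rw [Finset.sum_congr rfl (fun i _ => map_sum D' _ _)]
    have hterm : ∀ i j, D' (Matrix.single i j (x i j))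
        = Matrix.single i j (δ (x i j)) := by
      intro i j
      rw [← aux_hfac n (x i j) i j, hD'leib, hD'e, mul_zero, add_zero, hDSδ,
        aux_hfac n (δ (x i j)) i j]
    rw [Finset.sum_congr rfl (fun i _ => Finset.sum_congr rfl (fun j _ => hterm i j))]
    conv_rhs => rw [Matrix.matrix_eq_sum_single (x.map δ)]
    refine Finset.sum_congr rfl fun i _ => Finset.sum_congr rfl fun j _ => ?_
    rw [Matrix.map_apply]
  refine ⟨a, δ, hδleib, fun x => ?_⟩
  rw [← hmap x, hD'x x]
  abel

/-- Uniqueness part, over a general commutative `ℂ`-algebra. -/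
private lemma aux_unique (n : ℕ) (hn : 1 ≤ n)
    (a₁ a₂ : Matrix (Fin n) (Fin n) R) (δ₁ δ₂ : R →ₗ[ℂ] R)
    (hδ₁ : ∀ f g : R, δ₁ (f * g) = δ₁ f * g + f * δ₁ g)
    (hδ₂ : ∀ f g : R, δ₂ (f * g) = δ₂ f * g + f * δ₂ g)
    (hrep : ∀ x : Matrix (Fin n) (Fin n) R,
      (a₁ * x - x * a₁) + x.map δ₁ = (a₂ * x - x * a₂) + x.map δ₂) :
    δ₁ = δ₂ ∧ ∀ x : Matrix (Fin n) (Fin n) R, a₁ * x - x * a₁ = a₂ * x - x * a₂ := by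
  classical
  set z : Fin n := ⟨0, hn⟩ with hz
  have hδone : ∀ (δ : R →ₗ[ℂ] R), (∀ f g : R, δ (f * g) = δ f * g + f * δ g) → δ 1 = 0 := by
    intro δ hδ
    have h := hδ 1 1
    simp only [one_mul, mul_one] at h
    have h0 : δ 1 + 0 = δ 1 + δ 1 := by rw [add_zero]; exact h
    exact (add_left_cancel h0).symm
  have he_map : ∀ (δ : R →ₗ[ℂ] R), δ 1 = 0 → ∀ k l : Fin n,
      (Matrix.single k l (1 : R)).map δ = 0 := by
    intro δ hδ k l
    ext i j
    rw [Matrix.map_apply, Matrix.zero_apply]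
    by_cases h : k = i ∧ l = j
    · obtain ⟨rfl, rfl⟩ := h
      rw [Matrix.single_apply_same, hδ]
    · rw [Matrix.single_apply_of_ne _ _ _ _ _ h, map_zero]
  have hb : ∀ k l : Fin n, Commute (Matrix.single k l (1 : R)) (a₁ - a₂) := by
    intro k l
    have h := hrep (Matrix.single k l (1 : R))
    rw [he_map δ₁ (hδone δ₁ hδ₁) k l, he_map δ₂ (hδone δ₂ hδ₂) k l, add_zero, add_zero] at h
    have h'' := sub_eq_sub_iff_add_eq_add.mp h
    show Matrix.single k l (1 : R) * (a₁ - a₂)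
      = (a₁ - a₂) * Matrix.single k l (1 : R)
    rw [mul_sub, sub_mul, sub_eq_sub_iff_add_eq_add]
    rw [add_comm (Matrix.single k l (1 : R) * a₁)]
    exact h''.symm
  obtain ⟨r, hr⟩ := Matrix.mem_range_scalar_of_commute_single
    (M := a₁ - a₂) (fun i j _ => hb i j)
  have hcomm : ∀ x : Matrix (Fin n) (Fin n) R, (a₁ - a₂) * x = x * (a₁ - a₂) := by
    intro x
    rw [← hr]
    exact aux_scalar_comm n r x
  have hsecond : ∀ x : Matrix (Fin n) (Fin n) R, a₁ * x - x * a₁ = a₂ * x - x * a₂ := by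
    intro x
    have h := hcomm x
    rw [sub_mul, mul_sub] at h
    have h' := sub_eq_sub_iff_add_eq_add.mp h
    rw [sub_eq_sub_iff_add_eq_add]
    exact h'.trans (add_comm _ _)
  refine ⟨?_, hsecond⟩
  have hmapeq : ∀ x : Matrix (Fin n) (Fin n) R, x.map δ₁ = x.map δ₂ := by
    intro x
    have h := hrep x
    rw [hsecond x] at h
    exact add_left_cancel h
  ext f
  have h := congrFun (congrFun (congrArg
    (fun m : Matrix (Fin n) (Fin n) R => (m : Fin n → Fin n → R))
    (hmapeq (Matrix.scalar (Fin n) f))) z) z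
  simpa only [Matrix.map_apply, aux_scalar_entry n hn, Matrix.scalar_apply, Matrix.diagonal_apply_eq] using h

end Generic

/-- Every derivation `D` of the matrix algebra `Mₙ(L⁰(μ))` over a finite measure space
decomposes uniquely as `D = D_a + D_δ` with `D_a` inner (implemented by some matrix
`a`) and `D_δ` the entrywise application of a derivation `δ` of `L⁰(μ)`. -/
theorem derivation_on_matrix_L0_decomposition
    {α : Type*} [MeasurableSpace α] (μ : Measure α) [IsFiniteMeasure μ]
    (n : ℕ) (hn : 1 ≤ n)
    (D : Matrix (Fin n) (Fin n) (α →ₘ[μ] ℂ) →ₗ[ℂ] Matrix (Fin n) (Fin n) (α →ₘ[μ] ℂ))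
    (hD_leibniz : ∀ x y : Matrix (Fin n) (Fin n) (α →ₘ[μ] ℂ),
      D (x * y) = D x * y + x * D y) :
    (∃ (a : Matrix (Fin n) (Fin n) (α →ₘ[μ] ℂ))
        (δ : (α →ₘ[μ] ℂ) →ₗ[ℂ] (α →ₘ[μ] ℂ)),
      (∀ f g : α →ₘ[μ] ℂ, δ (f * g) = δ f * g + f * δ g) ∧
      (∀ x : Matrix (Fin n) (Fin n) (α →ₘ[μ] ℂ),
        D x = (a * x - x * a) + x.map δ)) ∧
    (∀ (a₁ a₂ : Matrix (Fin n) (Fin n) (α →ₘ[μ] ℂ))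
        (δ₁ δ₂ : (α →ₘ[μ] ℂ) →ₗ[ℂ] (α →ₘ[μ] ℂ)),
      (∀ f g : α →ₘ[μ] ℂ, δ₁ (f * g) = δ₁ f * g + f * δ₁ g) →
      (∀ f g : α →ₘ[μ] ℂ, δ₂ (f * g) = δ₂ f * g + f * δ₂ g) →
      (∀ x : Matrix (Fin n) (Fin n) (α →ₘ[μ] ℂ),
        D x = (a₁ * x - x * a₁) + x.map δ₁) →
      (∀ x : Matrix (Fin n) (Fin n) (α →ₘ[μ] ℂ),
        D x = (a₂ * x - x * a₂) + x.map δ₂) →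
      δ₁ = δ₂ ∧
        ∀ x : Matrix (Fin n) (Fin n) (α →ₘ[μ] ℂ),
          a₁ * x - x * a₁ = a₂ * x - x * a₂) := by
  constructor
  · exact aux_exists n hn D hD_leibniz
  · intro a₁ a₂ δ₁ δ₂ hδ₁ hδ₂ h1 h2
    exact aux_unique n hn a₁ a₂ δ₁ δ₂ hδ₁ hδ₂ (fun x => (h1 x).symm.trans (h2 x))
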